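/- Let T > 0, c ≥ 0, g ∈ ℝ, and let f : [0,T] → ℝ be continuous. Let w : [0,T] → ℝ be differentiable with w'(t) = −c·max(0, −w(t)) − f(t) for all t ∈ [0,T] and w(T) = g. Then for every t ∈ [0,T], w(t) = sup { e^{−∫_t^T a(s) ds} g + ∫_t^T e^{−∫_t^s a(r) dr} f(s) ds : a : [0,T] → [0,c] measurable }. -/

import Mathlib

open Set Filter MeasureTheory intervalIntegral
open scoped Topology

private lemma hj_exp_term_le {d δ v : ℝ} (h0 : 0 ≤ δ) (hd : δ ≤ d) :
    (Real.exp (-δ) - 1) * v ≤ d * max 0 (-v) := by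
  rcases le_or_gt 0 v with hv | hv
  · have h1 : Real.exp (-δ) ≤ 1 := Real.exp_le_one_iff.2 (by linarith)
    have h2 : (Real.exp (-δ) - 1) * v ≤ 0 :=
      mul_nonpos_of_nonpos_of_nonneg (by linarith) hv
    exact h2.trans (mul_nonneg (h0.trans hd) (le_max_left _ _))
  · have hmax : max 0 (-v) = -v := max_eq_right (by linarith)
    have h1 : -δ + 1 ≤ Real.exp (-δ) := Real.add_one_le_exp (-δ)
    rw [hmax]
    nlinarith [Real.exp_pos (-δ)]

/-- Main work lemma: for any admissible control `a`, the associated payoff is at most `w t`;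
moreover if `a` is the optimal feedback control, the payoff equals `w t`. -/
private lemma hj_main (T c : ℝ) (hc : 0 ≤ c) (f : ℝ → ℝ)
    (hf : ContinuousOn f (Set.Icc 0 T)) (w : ℝ → ℝ)
    (hw : ∀ s ∈ Set.Icc (0:ℝ) T,
      HasDerivWithinAt w (-(c * max 0 (-w s)) - f s) (Set.Icc 0 T) s)
    (t : ℝ) (ht : t ∈ Set.Icc 0 T)
    (a : ℝ → ℝ) (ha : Measurable a) (hab : ∀ s, a s ∈ Set.Icc 0 c) :
    (Real.exp (-(∫ s in t..T, a s)) * w T +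
      (∫ s in t..T, Real.exp (-(∫ r in t..s, a r)) * f s) ≤ w t) ∧
    ((∀ s ∈ Set.Icc (0:ℝ) T, (w s < 0 → a s = c) ∧ (0 ≤ w s → a s = 0)) →
      Real.exp (-(∫ s in t..T, a s)) * w T +
        (∫ s in t..T, Real.exp (-(∫ r in t..s, a r)) * f s) = w t) := by
  obtain ⟨ht0, htT⟩ := ht
  have h0T : (0:ℝ) ≤ T := ht0.trans htT
  have hsubIcc : Icc t T ⊆ Icc (0:ℝ) T := Icc_subset_Icc ht0 le_rfl
  -- integrability of the control
  have hInt : ∀ u v : ℝ, IntervalIntegrable a volume u v := by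
    intro u v
    rw [intervalIntegrable_iff]
    have hconst : IntegrableOn (fun _ : ℝ => c) (Set.uIoc u v) volume :=
      integrableOn_const measure_Ioc_lt_top.ne
    refine hconst.mono' ha.aestronglyMeasurable.restrict (ae_of_all _ fun s => ?_)
    rw [Real.norm_eq_abs, abs_of_nonneg (hab s).1]
    exact (hab s).2
  set A : ℝ → ℝ := fun s => ∫ r in t..s, a r with hA
  set E : ℝ → ℝ := fun s => Real.exp (-(A s)) with hE
  have hEpos : ∀ s, 0 < E s := fun s => Real.exp_pos _
  have hAadd : ∀ x z : ℝ, A z = A x + ∫ r in x..z, a r := by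
    intro x z
    have := integral_add_adjacent_intervals (hInt t x) (hInt x z)
    simp only [hA]
    linarith
  have hδ0 : ∀ x z : ℝ, x ≤ z → 0 ≤ ∫ r in x..z, a r := fun x z hxz =>
    intervalIntegral.integral_nonneg hxz (fun s _ => (hab s).1)
  have hδc : ∀ x z : ℝ, x ≤ z → (∫ r in x..z, a r) ≤ c * (z - x) := by
    intro x z hxz
    have h1 : (∫ r in x..z, a r) ≤ ∫ _r in x..z, c :=
      intervalIntegral.integral_mono_on hxz (hInt x z) intervalIntegrable_const
        (fun s _ => (hab s).2)
    rw [intervalIntegral.integral_const, smul_eq_mul] at h1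
    linarith
  have hAcont : ContinuousOn A (Icc 0 T) := by
    have := intervalIntegral.continuousOn_primitive_interval' (hInt 0 T)
      (by rw [uIcc_of_le h0T]; exact ⟨ht0, htT⟩)
    rwa [uIcc_of_le h0T] at this
  have hEcont : ContinuousOn E (Icc 0 T) :=
    Real.continuous_exp.comp_continuousOn hAcont.neg
  set G : ℝ → ℝ := fun r => E r * f r with hG
  have hGcont : ContinuousOn G (Icc 0 T) := hEcont.mul hf
  have hGint : ∀ u v, u ∈ Icc (0:ℝ) T → v ∈ Icc (0:ℝ) T →
      IntervalIntegrable G volume u v := by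
    intro u v hu hv
    apply ContinuousOn.intervalIntegrable
    refine hGcont.mono ?_
    rw [uIcc_eq_union]
    exact union_subset (Icc_subset_Icc hu.1 hv.2) (Icc_subset_Icc hv.1 hu.2)
  set P : ℝ → ℝ := fun s => ∫ r in t..s, G r with hP
  have hPcont : ContinuousOn P (Icc t T) := by
    have := intervalIntegral.continuousOn_primitive_interval'
      (hGint t T ⟨ht0, htT⟩ ⟨h0T, le_rfl⟩)
      (by rw [uIcc_of_le htT]; exact ⟨le_rfl, htT⟩)
    rwa [uIcc_of_le htT] at this
  set ψ : ℝ → ℝ := fun s => E s * w s + P s with hψ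
  have hwcont : ContinuousOn w (Icc 0 T) := fun s hs => (hw s hs).continuousWithinAt
  have hψcont : ContinuousOn ψ (Icc t T) :=
    ((hEcont.mono hsubIcc).mul (hwcont.mono hsubIcc)).add hPcont
  have hψt : ψ t = w t := by
    simp [hψ, hP, hE, hA, intervalIntegral.integral_same]
  -- per-point facts, for x ∈ Ico t T
  have hslw : ∀ x ∈ Ico t T, Tendsto (slope w x) (𝓝[Ioc x T] x)
      (𝓝 (-(c * max 0 (-w x)) - f x)) := by
    intro x hx
    have hx0T : x ∈ Icc (0:ℝ) T := ⟨ht0.trans hx.1, hx.2.le⟩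
    have h1 := hasDerivWithinAt_iff_tendsto_slope.1 (hw x hx0T)
    refine h1.mono_left (nhdsWithin_mono x fun z hz => ?_)
    exact ⟨⟨(ht0.trans hx.1).trans hz.1.le, hz.2⟩, ne_of_gt hz.1⟩
  have hwx : ∀ x ∈ Ico t T, Tendsto w (𝓝[Ioc x T] x) (𝓝 (w x)) := by
    intro x hx
    have hx0T : x ∈ Icc (0:ℝ) T := ⟨ht0.trans hx.1, hx.2.le⟩
    exact ((hw x hx0T).continuousWithinAt).mono_left
      (nhdsWithin_mono x fun z hz => ⟨(ht0.trans hx.1).trans hz.1.le, hz.2⟩)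
  have hPder : ∀ x ∈ Ico t T, HasDerivWithinAt P (G x) (Ici x) x := by
    intro x hx
    have hx0T : x ∈ Icc (0:ℝ) T := ⟨ht0.trans hx.1, hx.2.le⟩
    have hIocmem : Ioc x T ∈ 𝓝[>] x := by
      rw [← nhdsWithin_Ioc_eq_nhdsGT hx.2]
      exact self_mem_nhdsWithin
    refine intervalIntegral.integral_hasDerivWithinAt_right
      (hGint t x ⟨ht0, htT⟩ hx0T) ?_ ?_
    · refine ⟨Icc x T, mem_of_superset hIocmem Ioc_subset_Icc_self, ?_⟩
      exact ((hGcont.mono (Icc_subset_Icc hx0T.1 le_rfl)).aestronglyMeasurable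
        measurableSet_Icc)
    · refine (hGcont.continuousWithinAt hx0T).mono_of_mem_nhdsWithin ?_
      exact mem_of_superset hIocmem fun z hz => ⟨(ht0.trans hx.1).trans hz.1.le, hz.2⟩
  have hslP : ∀ x ∈ Ico t T, Tendsto (slope P x) (𝓝[Ioc x T] x) (𝓝 (G x)) := by
    intro x hx
    have h1 := hasDerivWithinAt_iff_tendsto_slope.1 (hPder x hx)
    refine h1.mono_left (nhdsWithin_mono x fun z hz => ?_)
    exact ⟨hz.1.le, ne_of_gt hz.1⟩
  -- slope identity
  have hid : ∀ x, ∀ z ∈ Ioc x T, slope ψ x z =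
      E x * slope w x z +
        E x * ((Real.exp (-(∫ r in x..z, a r)) - 1) * w z) / (z - x) +
        slope P x z := by
    intro x z hz
    have hzx : z - x ≠ 0 := sub_ne_zero.2 (ne_of_gt hz.1)
    have hEz : E z = E x * Real.exp (-(∫ r in x..z, a r)) := by
      simp only [hE, hAadd x z, neg_add, Real.exp_add]
    simp only [slope_def_field, hψ]
    rw [hEz]
    field_simp
    ring
  -- the first claim: upper bound
  have claimA : ∀ z ∈ Icc t T, ψ z ≤ w t := by
    intro z hz
    refine image_le_of_liminf_slope_right_le_deriv_boundary (B := fun _ => w t)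
      (B' := fun _ => 0) hψcont (le_of_eq hψt) continuousOn_const
      (fun x _ => hasDerivWithinAt_const x _ (w t)) ?_ hz
    intro x hx r hr
    have hx0T : x ∈ Icc (0:ℝ) T := ⟨ht0.trans hx.1, hx.2.le⟩
    -- bound on slope of ψ from the right
    have hR : Tendsto (fun z => E x * slope w x z + E x * (c * max 0 (-w z)) + slope P x z)
        (𝓝[Ioc x T] x) (𝓝 0) := by
      have t1 := (hslw x hx).const_mul (E x)
      have t2 : Tendsto (fun z => E x * (c * max 0 (-w z))) (𝓝[Ioc x T] x)
          (𝓝 (E x * (c * max 0 (-w x)))) :=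
        (((tendsto_const_nhds.max (hwx x hx).neg).const_mul c).const_mul (E x))
      have t3 := hslP x hx
      have := (t1.add t2).add t3
      have hval : E x * (-(c * max 0 (-w x)) - f x) + E x * (c * max 0 (-w x)) + G x = 0 := by
        simp only [hG]; ring
      rwa [hval] at this
    have hbound : ∀ z ∈ Ioc x T, slope ψ x z ≤
        E x * slope w x z + E x * (c * max 0 (-w z)) + slope P x z := by
      intro z hz
      rw [hid x z hz]
      have h1 : (Real.exp (-(∫ r in x..z, a r)) - 1) * w z ≤ (c * (z - x)) * max 0 (-w z) :=
        hj_exp_term_le (hδ0 x z hz.1.le) (hδc x z hz.1.le)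
      have h2 : E x * ((Real.exp (-(∫ r in x..z, a r)) - 1) * w z) / (z - x) ≤
          E x * (c * max 0 (-w z)) := by
        rw [div_le_iff₀ (sub_pos.2 hz.1)]
        calc E x * ((Real.exp (-(∫ r in x..z, a r)) - 1) * w z)
            ≤ E x * ((c * (z - x)) * max 0 (-w z)) :=
              mul_le_mul_of_nonneg_left h1 (hEpos x).le
          _ = E x * (c * max 0 (-w z)) * (z - x) := by ring
      linarith
    rw [← nhdsWithin_Ioc_eq_nhdsGT hx.2]
    haveI : (𝓝[Ioc x T] x).NeBot := by
      rw [nhdsWithin_Ioc_eq_nhdsGT hx.2]; infer_instance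
    apply Eventually.frequently
    filter_upwards [self_mem_nhdsWithin, hR.eventually_lt_const hr] with z hz hlt
    exact lt_of_le_of_lt (hbound z hz) hlt
  refine ⟨?_, ?_⟩
  · have := claimA T ⟨htT, le_rfl⟩
    calc Real.exp (-(∫ s in t..T, a s)) * w T +
          (∫ s in t..T, Real.exp (-(∫ r in t..s, a r)) * f s) = ψ T := by
          simp only [hψ, hP, hG, hE, hA]
      _ ≤ w t := this
  · -- equality for the optimal feedback control
    intro hopt
    have hMid : ∀ x ∈ Ico t T,
        Tendsto (fun z => E x * ((Real.exp (-(∫ r in x..z, a r)) - 1) * w z) / (z - x))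
          (𝓝[Ioc x T] x) (𝓝 (E x * (c * max 0 (-w x)))) := by
      intro x hx
      have hx0T : x ∈ Icc (0:ℝ) T := ⟨ht0.trans hx.1, hx.2.le⟩
      have hx0 : (0:ℝ) ≤ x := ht0.trans hx.1
      rcases lt_trichotomy (w x) 0 with hwxneg | hwx0 | hwxpos
      · -- w x < 0 : the control is c near x
        have hev : ∀ᶠ z in 𝓝[Ioc x T] x, (∫ r in x..z, a r) = c * (z - x) := by
          have h2 : w ⁻¹' (Iio 0) ∈ 𝓝[Icc 0 T] x :=
            ((hw x hx0T).continuousWithinAt) (Iio_mem_nhds hwxneg)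
          obtain ⟨ε, hε, hsub⟩ := Metric.mem_nhdsWithin_iff.1 h2
          have hmem2 : Ioc x T ∩ Iio (x + ε) ∈ 𝓝[Ioc x T] x :=
            inter_mem self_mem_nhdsWithin
              (nhdsWithin_le_nhds (Iio_mem_nhds (by linarith)))
          filter_upwards [hmem2] with z hz
          obtain ⟨hz1, hz2⟩ := hz
          have hconst : EqOn a (fun _ => c) (uIcc x z) := by
            intro r hr
            rw [uIcc_of_le hz1.1.le] at hr
            have hrIcc : r ∈ Icc (0:ℝ) T := ⟨hx0.trans hr.1, hr.2.trans hz1.2⟩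
            have hrw : w r < 0 := by
              apply hsub
              refine ⟨Metric.mem_ball.2 ?_, hrIcc⟩
              obtain ⟨hr1, hr2⟩ := hr
              have hz2' : z < x + ε := hz2
              rw [Real.dist_eq, abs_of_nonneg (by linarith)]
              linarith
            exact (hopt r hrIcc).1 hrw
          rw [intervalIntegral.integral_congr hconst, intervalIntegral.integral_const,
            smul_eq_mul]
          ring
        have hder : HasDerivAt (fun z : ℝ => Real.exp (-(c * (z - x)))) (-c) x := by
          have h1 : HasDerivAt (fun z : ℝ => -(c * (z - x))) (-c) x := by
            simpa [Pi.neg_def] using (((hasDerivAt_id x).sub_const x).const_mul c).neg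
          simpa using h1.exp
        have hslopeh : Tendsto (fun z => (Real.exp (-(c * (z - x))) - 1) / (z - x))
            (𝓝[Ioc x T] x) (𝓝 (-c)) := by
          have h1 := hasDerivAt_iff_tendsto_slope.1 hder
          have h2 := h1.mono_left (nhdsWithin_mono x (fun z hz => ne_of_gt hz.1 :
            Ioc x T ⊆ {x}ᶜ))
          refine h2.congr ?_
          intro z
          simp [slope_def_field]
        have hlim : Tendsto (fun z => E x * (((Real.exp (-(c * (z - x))) - 1) / (z - x)) * w z))
            (𝓝[Ioc x T] x) (𝓝 (E x * (-c * w x))) :=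
          (hslopeh.mul (hwx x hx)).const_mul (E x)
        have hmax : max 0 (-w x) = -w x := max_eq_right (by linarith)
        have hval : E x * (-c * w x) = E x * (c * max 0 (-w x)) := by rw [hmax]; ring
        rw [← hval]
        refine Tendsto.congr' ?_ hlim
        filter_upwards [hev] with z hz
        rw [hz]
        ring
      · -- w x = 0 : squeeze
        have hzero : E x * (c * max 0 (-w x)) = 0 := by
          rw [hwx0]; simp
        rw [hzero]
        have hbd : ∀ᶠ z in 𝓝[Ioc x T] x,
            ‖E x * ((Real.exp (-(∫ r in x..z, a r)) - 1) * w z) / (z - x)‖ ≤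
              E x * c * |w z| := by
          filter_upwards [self_mem_nhdsWithin] with z hz
          have hzx : 0 < z - x := sub_pos.2 hz.1
          have h0 := hδ0 x z hz.1.le
          have hcb := hδc x z hz.1.le
          have habs : |Real.exp (-(∫ r in x..z, a r)) - 1| ≤ c * (z - x) := by
            rw [abs_le]
            constructor
            · have := Real.add_one_le_exp (-(∫ r in x..z, a r)); linarith
            · have : Real.exp (-(∫ r in x..z, a r)) ≤ 1 :=
                Real.exp_le_one_iff.2 (by linarith)
              nlinarith
          rw [Real.norm_eq_abs, abs_div, abs_mul, abs_mul,
            abs_of_pos (hEpos x), abs_of_pos hzx, div_le_iff₀ hzx]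
          calc E x * (|Real.exp (-(∫ r in x..z, a r)) - 1| * |w z|)
              ≤ E x * ((c * (z - x)) * |w z|) := by
                apply mul_le_mul_of_nonneg_left _ (hEpos x).le
                exact mul_le_mul_of_nonneg_right habs (abs_nonneg _)
            _ = E x * c * |w z| * (z - x) := by ring
        refine squeeze_zero_norm' hbd ?_
        have : Tendsto (fun z => E x * c * |w z|) (𝓝[Ioc x T] x)
            (𝓝 (E x * c * |w x|)) := ((hwx x hx).abs).const_mul (E x * c)
        rw [hwx0] at this
        simpa using this
      · -- w x > 0 : the control is 0 near x
        have hev : ∀ᶠ z in 𝓝[Ioc x T] x, (∫ r in x..z, a r) = 0 := by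
          have h2 : w ⁻¹' (Ioi 0) ∈ 𝓝[Icc 0 T] x :=
            ((hw x hx0T).continuousWithinAt) (Ioi_mem_nhds hwxpos)
          obtain ⟨ε, hε, hsub⟩ := Metric.mem_nhdsWithin_iff.1 h2
          have hmem2 : Ioc x T ∩ Iio (x + ε) ∈ 𝓝[Ioc x T] x :=
            inter_mem self_mem_nhdsWithin
              (nhdsWithin_le_nhds (Iio_mem_nhds (by linarith)))
          filter_upwards [hmem2] with z hz
          obtain ⟨hz1, hz2⟩ := hz
          have hconst : EqOn a (fun _ => (0:ℝ)) (uIcc x z) := by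
            intro r hr
            rw [uIcc_of_le hz1.1.le] at hr
            have hrIcc : r ∈ Icc (0:ℝ) T := ⟨hx0.trans hr.1, hr.2.trans hz1.2⟩
            have hrw : 0 < w r := by
              apply hsub
              refine ⟨Metric.mem_ball.2 ?_, hrIcc⟩
              obtain ⟨hr1, hr2⟩ := hr
              have hz2' : z < x + ε := hz2
              rw [Real.dist_eq, abs_of_nonneg (by linarith)]
              linarith
            exact (hopt r hrIcc).2 hrw.le
          rw [intervalIntegral.integral_congr hconst]
          simp
        have hzero : E x * (c * max 0 (-w x)) = 0 := by
          rw [max_eq_left (by linarith)]; simp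
        rw [hzero]
        refine Tendsto.congr' ?_ tendsto_const_nhds
        filter_upwards [hev] with z hz
        rw [hz]
        simp
    have hconst : ∀ z ∈ Icc t T, ψ z = ψ t := by
      apply constant_of_has_deriv_right_zero hψcont
      intro x hx
      have hlim : Tendsto (slope ψ x) (𝓝[Ioc x T] x) (𝓝 0) := by
        have t1 := (hslw x hx).const_mul (E x)
        have t2 := hMid x hx
        have t3 := hslP x hx
        have hsum := (t1.add t2).add t3
        have hval : E x * (-(c * max 0 (-w x)) - f x) + E x * (c * max 0 (-w x)) + G x = 0 := by
          simp only [hG]; ring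
        rw [hval] at hsum
        refine Tendsto.congr' ?_ hsum
        filter_upwards [self_mem_nhdsWithin] with z hz
        exact (hid x z hz).symm
      have h1 : HasDerivWithinAt ψ 0 (Ioi x) x := by
        rw [hasDerivWithinAt_iff_tendsto_slope' (notMem_Ioi.2 le_rfl)]
        rwa [← nhdsWithin_Ioc_eq_nhdsGT hx.2] 
      exact h1.Ici_of_Ioi
    have := hconst T ⟨htT, le_rfl⟩
    rw [hψt] at this
    calc Real.exp (-(∫ s in t..T, a s)) * w T +
          (∫ s in t..T, Real.exp (-(∫ r in t..s, a r)) * f s) = ψ T := by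
          simp only [hψ, hP, hG, hE, hA]
      _ = w t := this

/-- Verification theorem for the pathwise Hamilton–Jacobi equation of Section
4.2: the solution of `w' + c·w⁻ + f = 0`, `w(T) = g`, coincides with the value
of the deterministic control problem over measurable discount-rate controls with
values in `[0,c]`. -/
theorem hamilton_jacobi_verification
    (T c : ℝ) (hT : 0 < T) (hc : 0 ≤ c) (g : ℝ) (f : ℝ → ℝ)
    (hf : ContinuousOn f (Set.Icc 0 T)) (w : ℝ → ℝ)
    (hw : ∀ t ∈ Set.Icc (0:ℝ) T,
      HasDerivWithinAt w (-(c * max 0 (-w t)) - f t) (Set.Icc 0 T) t)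
    (hwT : w T = g) :
    ∀ t ∈ Set.Icc (0:ℝ) T,
      w t = sSup {v : ℝ | ∃ a : ℝ → ℝ, Measurable a ∧ (∀ s, a s ∈ Set.Icc 0 c) ∧
        v = Real.exp (-(∫ s in t..T, a s)) * g +
          ∫ s in t..T, Real.exp (-(∫ r in t..s, a r)) * f s} := by
  intro t ht
  have hwcont : ContinuousOn w (Set.Icc 0 T) := fun s hs => (hw s hs).continuousWithinAt
  -- the optimal feedback control
  set S : Set ℝ := Subtype.val '' {x : (Set.Icc (0:ℝ) T) | w ↑x < 0} with hS
  have hSm : MeasurableSet S := by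
    apply measurableSet_Icc.subtype_image
    exact hwcont.restrict.measurable measurableSet_Iio
  set astar : ℝ → ℝ := S.indicator (fun _ => c) with hastar
  have hameas : Measurable astar := measurable_const.indicator hSm
  have havals : ∀ s, astar s ∈ Set.Icc 0 c := by
    intro s
    by_cases hs : s ∈ S
    · rw [hastar, Set.indicator_of_mem hs]; exact ⟨hc, le_rfl⟩
    · rw [hastar, Set.indicator_of_notMem hs]; exact ⟨le_rfl, hc⟩
  have hmemS : ∀ s, s ∈ S ↔ (s ∈ Set.Icc (0:ℝ) T ∧ w s < 0) := by
    intro s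
    constructor
    · rintro ⟨y, hy, rfl⟩
      exact ⟨y.2, hy⟩
    · rintro ⟨h1, h2⟩
      exact ⟨⟨s, h1⟩, h2, rfl⟩
  have hopt : ∀ s ∈ Set.Icc (0:ℝ) T, (w s < 0 → astar s = c) ∧ (0 ≤ w s → astar s = 0) := by
    intro s hs
    constructor
    · intro hws
      rw [hastar, Set.indicator_of_mem ((hmemS s).2 ⟨hs, hws⟩)]
    · intro hws
      rw [hastar, Set.indicator_of_notMem]
      intro hmem
      exact absurd ((hmemS s).1 hmem).2 (not_lt.2 hws)
  have hgreatest : IsGreatest {v : ℝ | ∃ a : ℝ → ℝ, Measurable a ∧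
      (∀ s, a s ∈ Set.Icc 0 c) ∧
      v = Real.exp (-(∫ s in t..T, a s)) * g +
        ∫ s in t..T, Real.exp (-(∫ r in t..s, a r)) * f s} (w t) := by
    constructor
    · refine ⟨astar, hameas, havals, ?_⟩
      have h := (hj_main T c hc f hf w hw t ht astar hameas havals).2 hopt
      rw [← hwT]
      exact h.symm
    · rintro v ⟨a, ha, hav, rfl⟩
      have h := (hj_main T c hc f hf w hw t ht a ha hav).1
      rw [← hwT]
      exact h
  exact (hgreatest.csSup_eq).symm
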